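/- Let Γ be a (discrete) group, let F ⊆ Γ ∖ {e} be a finite subset, let z : F → ℂ, and set X = Σ_{f ∈ F} z_f λ_Γ(f), a bounded operator on ℓ²(Γ, ℂ). Suppose C ⊆ Γ satisfies fC ∩ C = ∅ for all f ∈ F, set D = Γ ∖ C, and let γ_1, …, γ_N ∈ Γ be elements such that the sets γ_1 D, …, γ_N D are pairwise disjoint. Then ‖(1/N) Σ_{j=1}^N λ_Γ(γ_j) X λ_Γ(γ_j)⁻¹‖ ≤ (2/√N) ‖X‖. -/

import Mathlib

open scoped ENNReal

noncomputable section

set_option maxHeartbeats 1000000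
set_option synthInstance.maxHeartbeats 1000000

abbrev l2 (Γ : Type*) := lp (fun _ : Γ => ℂ) 2

def lamAux {Γ : Type*} [Group Γ] (γ : Γ) (f : l2 Γ) : l2 Γ :=
  ⟨fun x => f (γ⁻¹ * x), by
    apply memℓp_gen
    have h1 : Summable fun i : Γ => ‖f i‖ ^ (2 : ℝ≥0∞).toReal :=
      (lp.memℓp f).summable (by norm_num)
    exact (Equiv.mulLeft γ⁻¹).summable_iff.mpr h1⟩

theorem lamAux_apply {Γ : Type*} [Group Γ] (γ : Γ) (f : l2 Γ) (x : Γ) :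
    lamAux γ f x = f (γ⁻¹ * x) := rfl

theorem lamAux_norm {Γ : Type*} [Group Γ] (γ : Γ) (f : l2 Γ) : ‖lamAux γ f‖ = ‖f‖ := by
  rw [lp.norm_eq_tsum_rpow (by norm_num) (lamAux γ f), lp.norm_eq_tsum_rpow (by norm_num) f]
  congr 1
  have h := (Equiv.mulLeft γ⁻¹).tsum_eq (fun i : Γ => ‖f i‖ ^ (2 : ℝ≥0∞).toReal)
  exact h

def lam (Γ : Type*) [Group Γ] (γ : Γ) : l2 Γ →L[ℂ] l2 Γ :=
  LinearMap.mkContinuous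
    { toFun := lamAux γ
      map_add' := fun f g => lp.ext rfl
      map_smul' := fun c f => lp.ext rfl }
    1 (fun f => by rw [one_mul]; exact le_of_eq (lamAux_norm γ f))

def Cred (Γ : Type*) [Group Γ] : Set (l2 Γ →L[ℂ] l2 Γ) :=
  closure (Submodule.span ℂ (Set.range (lam Γ)) : Set (l2 Γ →L[ℂ] l2 Γ))

def deltaE (Γ : Type*) [Group Γ] : l2 Γ :=
  letI := Classical.decEq Γ
  lp.single 2 (1 : Γ) (1 : ℂ)

def IsPowersGroup (Γ : Type*) [Group Γ] : Prop :=
  ∀ (F : Finset Γ), (1 : Γ) ∉ F → ∀ N : ℕ, 1 ≤ N →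
    ∃ (C D : Set Γ) (g : Fin N → Γ),
      C ∪ D = Set.univ ∧ C ∩ D = ∅ ∧
      (∀ f ∈ F, (fun x => f * x) '' C ∩ C = ∅) ∧
      (∀ j k : Fin N, j ≠ k → (fun x => g j * x) '' D ∩ (fun x => g k * x) '' D = ∅)

section PowersAux

variable {Γ : Type*}


def projAux (S : Set Γ) (f : l2 Γ) : l2 Γ :=
  ⟨S.indicator f, by
    apply memℓp_gen
    have h1 : Summable fun i : Γ => ‖f i‖ ^ (2 : ℝ≥0∞).toReal :=
      (lp.memℓp f).summable (by norm_num)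
    refine h1.of_nonneg_of_le (fun i => ?_) (fun i => ?_)
    · positivity
    · exact Real.rpow_le_rpow (norm_nonneg _) (norm_indicator_le_norm_self _ _) (by norm_num)⟩

theorem projAux_apply (S : Set Γ) (f : l2 Γ) (x : Γ) :
    projAux S f x = S.indicator f x := rfl

theorem projAux_norm_le (S : Set Γ) (f : l2 Γ) : ‖projAux S f‖ ≤ ‖f‖ := by
  rw [lp.norm_eq_tsum_rpow (by norm_num) (projAux S f), lp.norm_eq_tsum_rpow (by norm_num) f]
  apply Real.rpow_le_rpow
  · apply tsum_nonneg; intro i; positivity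
  · apply Summable.tsum_le_tsum
    · intro i
      exact Real.rpow_le_rpow (norm_nonneg _) (norm_indicator_le_norm_self _ _) (by norm_num)
    · apply Summable.of_nonneg_of_le (fun i => by positivity)
        (fun i => Real.rpow_le_rpow (norm_nonneg _) (norm_indicator_le_norm_self _ _) (by norm_num))
      exact (lp.memℓp f).summable (by norm_num)
    · exact (lp.memℓp f).summable (by norm_num)
  · norm_num

def proj (S : Set Γ) : l2 Γ →L[ℂ] l2 Γ :=
  LinearMap.mkContinuous
    { toFun := projAux S
      map_add' := fun f g => lp.ext (by
        funext x
        show S.indicator (⇑(f + g)) x = S.indicator (⇑f) x + S.indicator (⇑g) x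
        by_cases h : x ∈ S
        · rw [Set.indicator_of_mem h, Set.indicator_of_mem h, Set.indicator_of_mem h]; rfl
        · rw [Set.indicator_of_notMem h, Set.indicator_of_notMem h, Set.indicator_of_notMem h,
            add_zero])
      map_smul' := fun c f => lp.ext (by
        funext x
        by_cases h : x ∈ S <;>
          simp [projAux_apply, lp.coeFn_smul, Set.indicator_of_mem, Set.indicator_of_notMem, h]) }
    1 (fun f => by rw [one_mul]; exact projAux_norm_le S f)

theorem proj_apply (S : Set Γ) (f : l2 Γ) (x : Γ) :
    proj S f x = S.indicator f x := rfl

theorem norm_proj_le (S : Set Γ) : ‖(proj S : l2 Γ →L[ℂ] l2 Γ)‖ ≤ 1 :=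
  LinearMap.mkContinuous_norm_le _ zero_le_one _

theorem norm_proj_apply_le (S : Set Γ) (f : l2 Γ) : ‖proj S f‖ ≤ ‖f‖ :=
  projAux_norm_le S f

local notation "⟪" x ", " y "⟫" => @inner ℂ _ _ x y

theorem inner_eq_zero_of_disj {u v : l2 Γ} (h : ∀ x, u x = 0 ∨ v x = 0) : ⟪u, v⟫ = 0 := by
  rw [lp.inner_eq_tsum]
  have : ∀ x : Γ, ⟪u x, v x⟫ = 0 := by
    intro x
    rcases h x with h' | h' <;> simp [h']
  calc ∑' x : Γ, ⟪u x, v x⟫ = ∑' _ : Γ, (0 : ℂ) := tsum_congr this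
    _ = 0 := tsum_zero

theorem proj_selfadjoint (S : Set Γ) :
    ContinuousLinearMap.adjoint (proj S : l2 Γ →L[ℂ] l2 Γ) = proj S := by
  symm
  rw [ContinuousLinearMap.eq_adjoint_iff]
  intro f g
  rw [lp.inner_eq_tsum, lp.inner_eq_tsum]
  congr 1
  funext x
  by_cases h : x ∈ S <;>
    simp [proj_apply, Set.indicator_of_mem, Set.indicator_of_notMem, h]

theorem pythagoras {N : ℕ} (v : Fin N → l2 Γ)
    (h : ∀ j k : Fin N, j ≠ k → ⟪v j, v k⟫ = 0) :
    ‖∑ j : Fin N, v j‖ ^ 2 = ∑ j : Fin N, ‖v j‖ ^ 2 := by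
  have key : ⟪∑ j : Fin N, v j, ∑ j : Fin N, v j⟫ = ∑ j : Fin N, ⟪v j, v j⟫ := by
    rw [sum_inner]
    refine Finset.sum_congr rfl fun j _ => ?_
    rw [inner_sum]
    rw [Finset.sum_eq_single j]
    · intro k _ hk
      exact h j k (Ne.symm hk)
    · intro hj; exact absurd (Finset.mem_univ j) hj
  rw [← inner_self_eq_norm_sq (𝕜 := ℂ), key, map_sum]
  exact Finset.sum_congr rfl fun j _ => inner_self_eq_norm_sq (𝕜 := ℂ) _

section GroupAux

variable [Group Γ]

theorem lam_apply' (γ : Γ) (f : l2 Γ) (x : Γ) : lam Γ γ f x = f (γ⁻¹ * x) := rfl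

theorem norm_lam_le (γ : Γ) : ‖lam Γ γ‖ ≤ 1 :=
  LinearMap.mkContinuous_norm_le _ zero_le_one _

theorem lam_mul_lam (γ δ : Γ) : lam Γ γ * lam Γ δ = lam Γ (γ * δ) := by
  ext f x
  show (lam Γ δ f) (γ⁻¹ * x) = f ((γ * δ)⁻¹ * x)
  rw [lam_apply', mul_inv_rev, mul_assoc]

theorem lam_one' : lam Γ (1 : Γ) = 1 := by
  ext f x
  show f ((1 : Γ)⁻¹ * x) = f x
  rw [inv_one, one_mul]

theorem lam_conj_proj (γ : Γ) (S : Set Γ) :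
    lam Γ γ * proj S * lam Γ γ⁻¹ = proj ((fun x => γ * x) '' S) := by
  ext f x
  show (proj S (lam Γ γ⁻¹ f)) (γ⁻¹ * x) = (proj ((fun x => γ * x) '' S) f) x
  rw [proj_apply, proj_apply]
  have hmem : γ⁻¹ * x ∈ S ↔ x ∈ (fun x => γ * x) '' S := by
    constructor
    · intro h
      exact ⟨γ⁻¹ * x, h, by simp⟩
    · rintro ⟨y, hy, rfl⟩
      rwa [inv_mul_cancel_left]
  by_cases h : γ⁻¹ * x ∈ S
  · rw [Set.indicator_of_mem h, Set.indicator_of_mem (hmem.mp h), lam_apply', inv_inv,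
      mul_inv_cancel_left]
  · rw [Set.indicator_of_notMem h, Set.indicator_of_notMem (fun h' => h (hmem.mpr h'))]

theorem X_apply (F : Finset Γ) (z : Γ → ℂ) (ξ : l2 Γ) (x : Γ) :
    ((∑ f ∈ F, z f • lam Γ f) ξ) x = ∑ f ∈ F, z f * ξ (f⁻¹ * x) := by
  rw [ContinuousLinearMap.sum_apply, lp.coeFn_sum, Finset.sum_apply]
  refine Finset.sum_congr rfl fun f _ => ?_
  rw [ContinuousLinearMap.smul_apply, lp.coeFn_smul, Pi.smul_apply, smul_eq_mul, lam_apply']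

theorem proj_X_proj (F : Finset Γ) (z : Γ → ℂ) (C : Set Γ)
    (hC : ∀ f ∈ F, (fun x => f * x) '' C ∩ C = ∅) :
    proj C * (∑ f ∈ F, z f • lam Γ f) * proj C = 0 := by
  ext ξ x
  show (proj C ((∑ f ∈ F, z f • lam Γ f) (proj C ξ))) x = (0 : l2 Γ) x
  rw [proj_apply, lp.coeFn_zero, Pi.zero_apply]
  by_cases hx : x ∈ C
  · rw [Set.indicator_of_mem hx, X_apply]
    apply Finset.sum_eq_zero
    intro f hf
    have h0 : (proj C ξ) (f⁻¹ * x) = 0 := by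
      rw [proj_apply, Set.indicator_of_notMem]
      intro hmem
      have : x ∈ (fun y => f * y) '' C ∩ C := ⟨⟨f⁻¹ * x, hmem, by simp⟩, hx⟩
      rw [hC f hf] at this
      exact this
    rw [h0, mul_zero]
  · rw [Set.indicator_of_notMem hx]

end GroupAux

theorem norm_sum_proj_comp_le {N : ℕ} (S : Fin N → Set Γ)
    (hS : ∀ j k : Fin N, j ≠ k → S j ∩ S k = ∅) (A : Fin N → (l2 Γ →L[ℂ] l2 Γ))
    (M : ℝ) (hM : 0 ≤ M) (hA : ∀ j, ‖A j‖ ≤ M) :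
    ‖∑ j : Fin N, proj (S j) * A j‖ ≤ Real.sqrt N * M := by
  refine ContinuousLinearMap.opNorm_le_bound _ (by positivity) fun ξ => ?_
  have hw : (∑ j : Fin N, proj (S j) * A j) ξ = ∑ j : Fin N, proj (S j) (A j ξ) := by
    simp [ContinuousLinearMap.sum_apply, ContinuousLinearMap.mul_apply]
  have horth : ∀ j k : Fin N, j ≠ k → ⟪proj (S j) (A j ξ), proj (S k) (A k ξ)⟫ = 0 := by
    intro j k hjk
    apply inner_eq_zero_of_disj
    intro x
    by_cases h : x ∈ S j
    · right
      rw [proj_apply, Set.indicator_of_notMem]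
      intro h'
      have hin : x ∈ S j ∩ S k := ⟨h, h'⟩
      rw [hS j k hjk] at hin
      exact hin
    · left
      rw [proj_apply, Set.indicator_of_notMem h]
  have hsq : ‖(∑ j : Fin N, proj (S j) * A j) ξ‖ ^ 2 ≤ N * (M * ‖ξ‖) ^ 2 := by
    rw [hw, pythagoras _ horth]
    calc ∑ j : Fin N, ‖proj (S j) (A j ξ)‖ ^ 2
        ≤ ∑ _j : Fin N, (M * ‖ξ‖) ^ 2 := by
          apply Finset.sum_le_sum
          intro j _
          have h1 : ‖proj (S j) (A j ξ)‖ ≤ M * ‖ξ‖ := by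
            refine (norm_proj_apply_le _ _).trans (((A j).le_opNorm ξ).trans ?_)
            exact mul_le_mul_of_nonneg_right (hA j) (norm_nonneg ξ)
          exact pow_le_pow_left₀ (norm_nonneg _) h1 2
      _ = N * (M * ‖ξ‖) ^ 2 := by
          rw [Finset.sum_const, Finset.card_univ, Fintype.card_fin, nsmul_eq_mul]
  calc ‖(∑ j : Fin N, proj (S j) * A j) ξ‖
      = Real.sqrt (‖(∑ j : Fin N, proj (S j) * A j) ξ‖ ^ 2) :=
        (Real.sqrt_sq (norm_nonneg _)).symm
    _ ≤ Real.sqrt (N * (M * ‖ξ‖) ^ 2) := Real.sqrt_le_sqrt hsq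
    _ = Real.sqrt N * (M * ‖ξ‖) := by
        rw [Real.sqrt_mul (by positivity), Real.sqrt_sq (by positivity)]
    _ = Real.sqrt N * M * ‖ξ‖ := by ring

theorem norm_sum_comp_proj_le {N : ℕ} (S : Fin N → Set Γ)
    (hS : ∀ j k : Fin N, j ≠ k → S j ∩ S k = ∅) (B : Fin N → (l2 Γ →L[ℂ] l2 Γ))
    (M : ℝ) (hM : 0 ≤ M) (hB : ∀ j, ‖B j‖ ≤ M) :
    ‖∑ j : Fin N, B j * proj (S j)‖ ≤ Real.sqrt N * M := by
  have key : ∑ j : Fin N, B j * proj (S j)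
      = ContinuousLinearMap.adjoint
          (∑ j : Fin N, proj (S j) * ContinuousLinearMap.adjoint (B j)) := by
    rw [map_sum]
    refine Finset.sum_congr rfl fun j _ => ?_
    rw [show proj (S j) * ContinuousLinearMap.adjoint (B j)
        = proj (S j) ∘L ContinuousLinearMap.adjoint (B j) from rfl,
      ContinuousLinearMap.adjoint_comp, ContinuousLinearMap.adjoint_adjoint, proj_selfadjoint]
    rfl
  rw [key, ContinuousLinearMap.adjoint.norm_map]
  refine norm_sum_proj_comp_le S hS _ M hM fun j => ?_
  rw [ContinuousLinearMap.adjoint.norm_map]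
  exact hB j

end PowersAux

/-- Powers' norm estimate: `‖(1/N) ∑ λ(γ_j) X λ(γ_j)⁻¹‖ ≤ (2/√N) ‖X‖` for
`X = ∑_{f ∈ F} z_f λ(f)`, given a Powers-type partition. -/
theorem norm_average_conjugates_le {Γ : Type*} [Group Γ]
    (F : Finset Γ) (hF : (1 : Γ) ∉ F) (z : Γ → ℂ)
    (C : Set Γ) (hC : ∀ f ∈ F, (fun x => f * x) '' C ∩ C = ∅)
    (N : ℕ) (hN : 1 ≤ N) (g : Fin N → Γ)
    (hdisj : ∀ j k : Fin N, j ≠ k →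
      (fun x => g j * x) '' Cᶜ ∩ (fun x => g k * x) '' Cᶜ = ∅) :
    ‖(N : ℂ)⁻¹ • ∑ j : Fin N, lam Γ (g j) * (∑ f ∈ F, z f • lam Γ f) * lam Γ ((g j)⁻¹)‖
      ≤ 2 / Real.sqrt N * ‖∑ f ∈ F, z f • lam Γ f‖ :=  by
  classical
  set X := ∑ f ∈ F, z f • lam Γ f with hX
  set P : l2 Γ →L[ℂ] l2 Γ := proj C with hP
  set Q : l2 Γ →L[ℂ] l2 Γ := proj Cᶜ with hQ
  have hPQ : P + Q = 1 := by
    ext ξ x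
    show P ξ x + Q ξ x = ξ x
    by_cases h : x ∈ C
    · rw [hP, hQ, proj_apply, proj_apply, Set.indicator_of_mem h,
        Set.indicator_of_notMem (by simpa using h), add_zero]
    · rw [hP, hQ, proj_apply, proj_apply, Set.indicator_of_notMem h,
        Set.indicator_of_mem (by simpa using h), zero_add]
  have hPXP : P * X * P = 0 := proj_X_proj F z C hC
  have hdecomp : X = Q * X + P * X * Q := by
    calc X = (P + Q) * X := by rw [hPQ, one_mul]
      _ = P * X + Q * X := add_mul _ _ _
      _ = P * X * (P + Q) + Q * X := by rw [hPQ, mul_one]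
      _ = (P * X * P + P * X * Q) + Q * X := by rw [mul_add]
      _ = Q * X + P * X * Q := by rw [hPXP, zero_add, add_comm]
  set S : Fin N → Set Γ := fun j => (fun x => g j * x) '' Cᶜ with hS
  have hSdisj : ∀ j k : Fin N, j ≠ k → S j ∩ S k = ∅ := hdisj
  have hmul : ∀ (Y Z : l2 Γ →L[ℂ] l2 Γ) (γ : Γ),
      (lam Γ γ * Y * lam Γ γ⁻¹) * (lam Γ γ * Z * lam Γ γ⁻¹)
        = lam Γ γ * (Y * Z) * lam Γ γ⁻¹ := by
    intro Y Z γ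
    have h1 : lam Γ γ⁻¹ * lam Γ γ = 1 := by rw [lam_mul_lam, inv_mul_cancel, lam_one']
    calc (lam Γ γ * Y * lam Γ γ⁻¹) * (lam Γ γ * Z * lam Γ γ⁻¹)
        = lam Γ γ * Y * ((lam Γ γ⁻¹ * lam Γ γ) * (Z * lam Γ γ⁻¹)) := by noncomm_ring
      _ = lam Γ γ * (Y * Z) * lam Γ γ⁻¹ := by rw [h1, one_mul]; noncomm_ring
  set A : Fin N → (l2 Γ →L[ℂ] l2 Γ) := fun j => lam Γ (g j) * X * lam Γ ((g j)⁻¹) with hA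
  set B : Fin N → (l2 Γ →L[ℂ] l2 Γ) := fun j => lam Γ (g j) * (P * X) * lam Γ ((g j)⁻¹) with hB
  have hconj : ∀ j, lam Γ (g j) * Q * lam Γ ((g j)⁻¹) = proj (S j) := fun j =>
    lam_conj_proj (g j) Cᶜ
  have key : ∀ j, A j = proj (S j) * A j + B j * proj (S j) := by
    intro j
    rw [← hconj j]
    calc A j = lam Γ (g j) * (Q * X + P * X * Q) * lam Γ ((g j)⁻¹) := by
          rw [hA, ← hdecomp]
      _ = lam Γ (g j) * (Q * X) * lam Γ ((g j)⁻¹)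
            + lam Γ (g j) * ((P * X) * Q) * lam Γ ((g j)⁻¹) := by noncomm_ring
      _ = (lam Γ (g j) * Q * lam Γ ((g j)⁻¹)) * A j
            + B j * (lam Γ (g j) * Q * lam Γ ((g j)⁻¹)) := by
          rw [hA, hB, hmul, hmul]
  have hnormA : ∀ j, ‖A j‖ ≤ ‖X‖ := by
    intro j
    have h1 := norm_mul_le (lam Γ (g j) * X) (lam Γ ((g j)⁻¹))
    have h2 := norm_mul_le (lam Γ (g j)) X
    have h3 := norm_lam_le (Γ := Γ) (g j)
    have h4 := norm_lam_le (Γ := Γ) ((g j)⁻¹)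
    have h5 := norm_nonneg X
    have h6 := norm_nonneg (lam Γ (g j) * X)
    nlinarith
  have hnormB : ∀ j, ‖B j‖ ≤ ‖X‖ := by
    intro j
    have h0 : ‖P * X‖ ≤ ‖X‖ := by
      have := norm_mul_le P X
      have := norm_proj_le (S := C) (Γ := Γ)
      have := norm_nonneg X
      nlinarith
    have h1 := norm_mul_le (lam Γ (g j) * (P * X)) (lam Γ ((g j)⁻¹))
    have h2 := norm_mul_le (lam Γ (g j)) (P * X)
    have h3 := norm_lam_le (Γ := Γ) (g j)
    have h4 := norm_lam_le (Γ := Γ) ((g j)⁻¹)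
    have h5 := norm_nonneg (P * X)
    have h6 := norm_nonneg (lam Γ (g j) * (P * X))
    nlinarith
  have hsum : ∑ j : Fin N, A j
      = (∑ j : Fin N, proj (S j) * A j) + ∑ j : Fin N, B j * proj (S j) := by
    rw [← Finset.sum_add_distrib]
    exact Finset.sum_congr rfl fun j _ => key j
  have hb1 : ‖∑ j : Fin N, proj (S j) * A j‖ ≤ Real.sqrt N * ‖X‖ :=
    norm_sum_proj_comp_le S hSdisj A ‖X‖ (norm_nonneg X) hnormA
  have hb2 : ‖∑ j : Fin N, B j * proj (S j)‖ ≤ Real.sqrt N * ‖X‖ :=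
    norm_sum_comp_proj_le S hSdisj B ‖X‖ (norm_nonneg X) hnormB
  have hbig : ‖∑ j : Fin N, A j‖ ≤ Real.sqrt N * ‖X‖ + Real.sqrt N * ‖X‖ := by
    rw [hsum]
    exact (norm_add_le _ _).trans (add_le_add hb1 hb2)
  have hNpos : (0 : ℝ) < N := by exact_mod_cast hN
  have hsqrtpos : 0 < Real.sqrt N := Real.sqrt_pos.mpr hNpos
  have hcnorm : ‖((N : ℂ)⁻¹)‖ = (N : ℝ)⁻¹ := by
    rw [norm_inv, Complex.norm_natCast]
  calc ‖(N : ℂ)⁻¹ • ∑ j : Fin N, A j‖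
      ≤ ‖((N : ℂ)⁻¹)‖ * ‖∑ j : Fin N, A j‖ := ContinuousLinearMap.opNorm_smul_le _ _
    _ = (N : ℝ)⁻¹ * ‖∑ j : Fin N, A j‖ := by rw [hcnorm]
    _ ≤ (N : ℝ)⁻¹ * (Real.sqrt N * ‖X‖ + Real.sqrt N * ‖X‖) := by
        exact mul_le_mul_of_nonneg_left hbig (by positivity)
    _ = 2 / Real.sqrt N * ‖X‖ := by
        have hss : Real.sqrt N * Real.sqrt N = N := Real.mul_self_sqrt hNpos.le
        field_simp
        linear_combination (2 * ‖X‖) * hss
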